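/- If two binary strings x, x' of length L satisfy B_{1,s}(x) ∩ B_{1,s}(x') ≠ ∅, then there exist indices i_del, i'_del ∈ [L] and a set {λ_1 < λ_2 < ⋯ < λ_{2s}} ⊆ [L] \ {i_del} such that the string x' with coordinate i'_del removed can be obtained from the string x with coordinate i_del removed by substituting at most 2s symbols, all of whose positions (in x) lie in {λ_1, …, λ_{2s}}. -/

import Mathlib

/-- `B_{1,s}(x)`: all strings of length `L - 1` obtained from `x` by one deletion
and at most `s` substitutions. -/
def ball (s : ℕ) {L : ℕ} (x : Fin L → Bool) : Set (Fin (L - 1) → Bool) :=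
  {y | ∃ f : Fin (L - 1) → Fin L, StrictMono f ∧ hammingDist y (x ∘ f) ≤ s}

lemma strictMono_eq_succAbove {n : ℕ} {f : Fin n → Fin (n + 1)} (hf : StrictMono f) :
    ∃ p : Fin (n + 1), f = p.succAbove := by
  have hinj : Function.Injective f := hf.injective
  have hcard : (Set.range f).toFinset.card = n := by
    rw [Set.toFinset_range, Finset.card_image_of_injective _ hinj, Finset.card_univ,
      Fintype.card_fin]
  have hne : (Set.range f).toFinset ≠ Finset.univ := by
    intro h
    have := Finset.card_univ (α := Fin (n + 1))
    rw [← h, hcard, Fintype.card_fin] at this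
    omega
  obtain ⟨p, hp⟩ : ∃ p : Fin (n + 1), p ∉ (Set.range f).toFinset := by
    by_contra h
    push_neg at h
    exact hne (Finset.eq_univ_of_forall h)
  have hsub : (Set.range f).toFinset ⊆ {p}ᶜ := by
    intro a ha
    simp only [Finset.mem_compl, Finset.mem_singleton]
    rintro rfl; exact hp ha
  have hcardc : ({p}ᶜ : Finset (Fin (n + 1))).card = n := by
    rw [Finset.card_compl, Finset.card_singleton, Fintype.card_fin]
    omega
  have heq : (Set.range f).toFinset = {p}ᶜ :=
    Finset.eq_of_subset_of_card_le hsub (by rw [hcard, hcardc])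
  have hrange : Set.range f = Set.range p.succAbove := by
    rw [Fin.range_succAbove]
    have := congr_arg (fun t : Finset (Fin (n + 1)) => (t : Set (Fin (n + 1)))) heq
    simpa using this
  exact ⟨p, (hf.range_inj (Fin.strictMono_succAbove p)).1 hrange⟩

theorem stmt1 (s n : ℕ) (hs : 0 < s) (hL : 2 * s + 1 ≤ n)
    (x x' : Fin (n + 1) → Bool)
    (hInt : (ball s x ∩ ball s x').Nonempty) :
    ∃ (idel i'del : Fin (n + 1)) (Λ : Finset (Fin (n + 1))),
      Λ.card = 2 * s ∧ idel ∉ Λ ∧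
      ∀ i : Fin n, x (idel.succAbove i) ≠ x' (i'del.succAbove i) →
        idel.succAbove i ∈ Λ := by
  obtain ⟨y, ⟨f, hf, hd⟩, ⟨f', hf', hd'⟩⟩ := hInt
  obtain ⟨idel, rfl⟩ := strictMono_eq_succAbove hf
  obtain ⟨i'del, rfl⟩ := strictMono_eq_succAbove hf'
  have htri : hammingDist (x ∘ idel.succAbove) (x' ∘ i'del.succAbove) ≤ 2 * s := by
    calc hammingDist (x ∘ idel.succAbove) (x' ∘ i'del.succAbove)
        ≤ hammingDist (x ∘ idel.succAbove) y + hammingDist y (x' ∘ i'del.succAbove) :=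
          hammingDist_triangle _ _ _
      _ ≤ s + s := by
          rw [hammingDist_comm]
          exact Nat.add_le_add hd hd'
      _ = 2 * s := by ring
  set M : Finset (Fin n) :=
    Finset.univ.filter (fun i => x (idel.succAbove i) ≠ x' (i'del.succAbove i)) with hM
  have hMcard : M.card ≤ 2 * s := htri
  set Λ₀ : Finset (Fin (n + 1)) := M.image idel.succAbove with hΛ₀
  have hΛ₀sub : Λ₀ ⊆ {idel}ᶜ := by
    intro a ha
    simp only [hΛ₀, Finset.mem_image] at ha
    obtain ⟨i, _, rfl⟩ := ha
    simp [Fin.succAbove_ne]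
  have hΛ₀card : Λ₀.card ≤ 2 * s := le_trans (Finset.card_image_le) hMcard
  have hcc : 2 * s ≤ ({idel}ᶜ : Finset (Fin (n + 1))).card := by
    rw [Finset.card_compl, Finset.card_singleton, Fintype.card_fin]
    omega
  obtain ⟨Λ, hsub1, hsub2, hcard⟩ :=
    Finset.exists_subsuperset_card_eq hΛ₀sub hΛ₀card hcc
  refine ⟨idel, i'del, Λ, hcard, ?_, ?_⟩
  · intro h
    have := hsub2 h
    simp at this
  · intro i hi
    exact hsub1 (Finset.mem_image_of_mem _ (by simp [hM, hi]))
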